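/- Let ψ be a PTL formula over Σ with operator depth at most K, where K > 0. Then for all strings u, v, s, t ∈ Σ*, the string u(st)^K s v satisfies ψ if and only if the string u(st)^K v satisfies ψ. -/
import Mathlib

/-- PTL formulas over alphabet `α`: atoms, conjunction, negation, and the past operator. -/
inductive PTL (α : Type*) : Type _
  | atom : α → PTL α
  | conj : PTL α → PTL α → PTL α
  | neg : PTL α → PTL α
  | past : PTL α → PTL α

/-- Satisfaction of a PTL formula in string `w` at (1-based) position `n ∈ {1,…,N+1}`. -/
def PTL.Sat {α : Type*} (w : List α) : PTL α → ℕ → Prop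
  | .atom a, n => 1 ≤ n ∧ w[n - 1]? = some a
  | .conj ψ₁ ψ₂, n => PTL.Sat w ψ₁ n ∧ PTL.Sat w ψ₂ n
  | .neg ψ, n => ¬ PTL.Sat w ψ n
  | .past ψ, n => ∃ m, 1 ≤ m ∧ m < n ∧ PTL.Sat w ψ m

/-- A string `w` of length `N` satisfies `ψ` iff `w, N+1 ⊨ ψ`. -/
def PTL.Models {α : Type*} (w : List α) (ψ : PTL α) : Prop :=
  PTL.Sat w ψ (w.length + 1)

/-- A language is PTL-definable if it is the set of strings satisfying some PTL formula. -/
def PTLDefinable {α : Type*} (L : Set (List α)) : Prop :=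
  ∃ ψ : PTL α, ∀ w : List α, w ∈ L ↔ PTL.Models w ψ

/-- Operator depth: maximal nesting of the past operator. -/
def PTL.depth {α : Type*} : PTL α → ℕ
  | .atom _ => 0
  | .conj ψ₁ ψ₂ => max (PTL.depth ψ₁) (PTL.depth ψ₂)
  | .neg ψ => PTL.depth ψ
  | .past ψ => PTL.depth ψ + 1

/-- `listPow w k` is the `k`-fold concatenation `w^k`. -/
def listPow {α : Type*} (w : List α) : ℕ → List α
  | 0 => []
  | k + 1 => w ++ listPow w k

namespace PTLPump

variable {α : Type*}

/-- Ehrenfeucht–Fraïssé style equivalence of positions up to past-depth `d`. -/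
def eqv (w1 w2 : List α) : ℕ → ℕ → ℕ → Prop
  | 0, n1, n2 => (1 ≤ n1 ↔ 1 ≤ n2) ∧ w1[n1 - 1]? = w2[n2 - 1]?
  | d + 1, n1, n2 => ((1 ≤ n1 ↔ 1 ≤ n2) ∧ w1[n1 - 1]? = w2[n2 - 1]?) ∧
      (∀ m1, 1 ≤ m1 → m1 < n1 → ∃ m2, 1 ≤ m2 ∧ m2 < n2 ∧ eqv w1 w2 d m1 m2) ∧
      (∀ m2, 1 ≤ m2 → m2 < n2 → ∃ m1, 1 ≤ m1 ∧ m1 < n1 ∧ eqv w1 w2 d m1 m2)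

lemma eqv_head {w1 w2 : List α} {d n1 n2 : ℕ} (h : eqv w1 w2 d n1 n2) :
    (1 ≤ n1 ↔ 1 ≤ n2) ∧ w1[n1 - 1]? = w2[n2 - 1]? := by
  cases d with
  | zero => exact h
  | succ d => exact h.1

lemma eqv_mono {w1 w2 : List α} :
    ∀ (d n1 n2 : ℕ), eqv w1 w2 (d + 1) n1 n2 → eqv w1 w2 d n1 n2
  | 0, n1, n2, h => h.1
  | d + 1, n1, n2, h =>
    ⟨h.1,
      fun m1 h1 h2 => (h.2.1 m1 h1 h2).imp fun m2 hm =>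
        ⟨hm.1, hm.2.1, eqv_mono d _ _ hm.2.2⟩,
      fun m2 h1 h2 => (h.2.2 m2 h1 h2).imp fun m1 hm =>
        ⟨hm.1, hm.2.1, eqv_mono d _ _ hm.2.2⟩⟩

lemma eqv_le {w1 w2 : List α} {d' d n1 n2 : ℕ} (hle : d' ≤ d)
    (h : eqv w1 w2 d n1 n2) : eqv w1 w2 d' n1 n2 := by
  induction d with
  | zero => exact Nat.le_zero.mp hle ▸ h
  | succ d ih =>
    rcases Nat.lt_or_ge d' (d + 1) with hlt | hge
    · exact ih (by omega) (eqv_mono _ _ _ h)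
    · have : d' = d + 1 := by omega
      exact this ▸ h

lemma sat_iff {w1 w2 : List α} :
    ∀ (ψ : PTL α) (d n1 n2 : ℕ), PTL.depth ψ ≤ d → eqv w1 w2 d n1 n2 →
      (PTL.Sat w1 ψ n1 ↔ PTL.Sat w2 ψ n2)
  | .atom a, d, n1, n2, _, h => by
      obtain ⟨h1, h2⟩ := eqv_head h
      simp only [PTL.Sat]
      rw [h2]
      tauto
  | .conj ψ1 ψ2, d, n1, n2, hd, h => by
      simp only [PTL.depth, max_le_iff] at hd
      simp only [PTL.Sat]
      exact and_congr (sat_iff ψ1 d n1 n2 hd.1 h) (sat_iff ψ2 d n1 n2 hd.2 h)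
  | .neg ψ, d, n1, n2, hd, h => by
      simp only [PTL.Sat]
      exact not_congr (sat_iff ψ d n1 n2 hd h)
  | .past ψ, d, n1, n2, hd, h => by
      have hd' : PTL.depth ψ + 1 ≤ d := hd
      have h' : eqv w1 w2 (PTL.depth ψ + 1) n1 n2 := eqv_le hd' h
      simp only [PTL.Sat]
      constructor
      · rintro ⟨m1, hm1, hlt, hs⟩
        obtain ⟨m2, a, b, c⟩ := h'.2.1 m1 hm1 hlt
        exact ⟨m2, a, b, (sat_iff ψ (PTL.depth ψ) m1 m2 le_rfl c).mp hs⟩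
      · rintro ⟨m2, hm2, hlt, hs⟩
        obtain ⟨m1, a, b, c⟩ := h'.2.2 m2 hm2 hlt
        exact ⟨m1, a, b, (sat_iff ψ (PTL.depth ψ) m1 m2 le_rfl c).mpr hs⟩

/-- Positions inside a common prefix are equivalent at every depth. -/
lemma eqv_prefix {c x1 x2 : List α} (hc : 0 < c.length) :
    ∀ (d n : ℕ), n ≤ c.length → eqv (c ++ x1) (c ++ x2) d n n := by
  intro d
  induction d with
  | zero =>
    intro n hn
    refine ⟨Iff.rfl, ?_⟩
    have hlt : n - 1 < c.length := by omega
    rw [List.getElem?_append_left hlt, List.getElem?_append_left hlt]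
  | succ d ih =>
    intro n hn
    refine ⟨⟨Iff.rfl, ?_⟩, ?_, ?_⟩
    · have hlt : n - 1 < c.length := by omega
      rw [List.getElem?_append_left hlt, List.getElem?_append_left hlt]
    · intro m1 h1 h2; exact ⟨m1, h1, h2, ih m1 (by omega)⟩
    · intro m2 h1 h2; exact ⟨m2, h1, h2, ih m2 (by omega)⟩

lemma listPow_length (p : List α) : ∀ k, (listPow p k).length = k * p.length
  | 0 => by simp [listPow]
  | k + 1 => by
      simp [listPow, listPow_length p k, Nat.succ_mul, Nat.add_comm]

lemma listPow_add (p : List α) (m e : ℕ) :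
    listPow p (m + e) = listPow p m ++ listPow p e := by
  induction m with
  | zero => simp [listPow, Nat.zero_add]
  | succ m ih =>
    have h : m + 1 + e = (m + e) + 1 := by omega
    rw [h]
    show p ++ listPow p (m + e) = (p ++ listPow p m) ++ listPow p e
    rw [ih, List.append_assoc]

lemma pow_get (p : List α) (c m j : ℕ) (hj : j < m * p.length) :
    (listPow p (c + m))[c * p.length + j]? = (listPow p m)[j]? := by
  rw [listPow_add, List.getElem?_append_right
    (by rw [listPow_length]; exact Nat.le_add_right _ _)]
  rw [listPow_length, Nat.add_sub_cancel_left]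

lemma pow_prefix (p : List α) (m e j : ℕ) (hj : j < m * p.length) :
    (listPow p (m + e))[j]? = (listPow p m)[j]? := by
  rw [listPow_add, List.getElem?_append_left (by rw [listPow_length]; exact hj)]

end PTLPump

namespace PTLPump

variable {α : Type*}

lemma listPow_one (p : List α) : listPow p 1 = p := by simp [listPow]

lemma pow_s_get (p s : List α) (hps : ∀ i, i < s.length → p[i]? = s[i]?)
    (K j : ℕ) (hj : j < K * p.length + s.length) :
    (listPow p K ++ s)[j]? = (listPow p (K + 1))[j]? := by
  rw [listPow_add, listPow_one]
  rcases lt_or_ge j (K * p.length) with h | h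
  · rw [List.getElem?_append_left (by rw [listPow_length]; exact h),
      List.getElem?_append_left (by rw [listPow_length]; exact h)]
  · rw [List.getElem?_append_right (by rw [listPow_length]; exact h),
      List.getElem?_append_right (by rw [listPow_length]; exact h),
      listPow_length]
    exact (hps _ (by omega)).symm

lemma letter1 (u p s v : List α) (K i : ℕ)
    (hi : i < u.length + K * p.length) :
    (u ++ listPow p K ++ s ++ v)[i]? = (u ++ listPow p K ++ v)[i]? := by
  have hX : (listPow p K).length = K * p.length := listPow_length _ _
  have g1 : i < (u ++ listPow p K ++ s).length := by
    simp only [List.length_append, hX]; omega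
  have g2 : i < (u ++ listPow p K).length := by
    simp only [List.length_append, hX]; omega
  rw [List.getElem?_append_left g1, List.getElem?_append_left g2,
      List.getElem?_append_left g2]

lemma letter2 (u p s v : List α) (K i : ℕ)
    (hi : u.length + K * p.length ≤ i) :
    (u ++ listPow p K ++ s ++ v)[i + s.length]? = (u ++ listPow p K ++ v)[i]? := by
  have hX : (listPow p K).length = K * p.length := listPow_length _ _
  have g1 : (u ++ listPow p K ++ s).length ≤ i + s.length := by
    simp only [List.length_append, hX]; omega
  have g2 : (u ++ listPow p K).length ≤ i := by
    simp only [List.length_append, hX]; omega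
  rw [List.getElem?_append_right g1, List.getElem?_append_right g2]
  congr 1
  simp only [List.length_append, hX]
  omega

lemma letter3 (u p s v : List α) (K c i2 : ℕ) (hK : 0 < K)
    (hps : ∀ i, i < s.length → p[i]? = s[i]?)
    (hS : 1 ≤ s.length) (hSL : s.length ≤ p.length)
    (hc : 1 ≤ c) (h1 : u.length ≤ i2)
    (h2 : i2 + c * p.length < u.length + K * p.length + s.length) :
    (u ++ listPow p K ++ s ++ v)[i2 + c * p.length]? =
      (u ++ listPow p K ++ v)[i2]? := by
  have hX : (listPow p K).length = K * p.length := listPow_length _ _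
  have hL : 1 ≤ p.length := le_trans hS hSL
  have hKL1 : (K + 1) * p.length = K * p.length + p.length := Nat.succ_mul K _
  have hcK : c ≤ K := by
    by_contra h
    push_neg at h
    have : (K + 1) * p.length ≤ c * p.length := Nat.mul_le_mul_right _ h
    omega
  have hcLL : p.length ≤ c * p.length := Nat.le_mul_of_pos_left _ hc
  have hsub : (K + 1 - c) * p.length + c * p.length = (K + 1) * p.length := by
    rw [← Nat.add_mul, Nat.sub_add_cancel (by omega)]
  have hj2lt : i2 - u.length < (K + 1 - c) * p.length := by omega
  -- left side
  have e1 : (u ++ listPow p K ++ s ++ v)[i2 + c * p.length]? =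
      (u ++ listPow p K ++ s)[i2 + c * p.length]? :=
    List.getElem?_append_left (by simp only [List.length_append, hX]; omega)
  have e2 : (u ++ listPow p K ++ s)[i2 + c * p.length]? =
      (listPow p K ++ s)[c * p.length + (i2 - u.length)]? := by
    rw [List.append_assoc, List.getElem?_append_right (l₁ := u) (by omega)]
    congr 1
    omega
  have e3 : (listPow p K ++ s)[c * p.length + (i2 - u.length)]? =
      (listPow p (K + 1))[c * p.length + (i2 - u.length)]? :=
    pow_s_get p s hps K _ (by omega)
  have e4 := pow_get p c (K + 1 - c) (i2 - u.length) hj2lt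
  rw [show c + (K + 1 - c) = K + 1 by omega] at e4
  -- right side
  have f1 : (u ++ listPow p K ++ v)[i2]? = (listPow p K)[i2 - u.length]? := by
    rw [List.getElem?_append_left (by simp only [List.length_append, hX]; omega),
        List.getElem?_append_right (l₁ := u) (by omega)]
  have f2 := pow_prefix p (K + 1 - c) (c - 1) (i2 - u.length) hj2lt
  rw [show K + 1 - c + (c - 1) = K by omega] at f2
  rw [e1, e2, e3, e4, f1, f2]

end PTLPump

namespace PTLPump

variable {α : Type*}

lemma key (u p s v : List α) (K : ℕ) (hK : 0 < K)
    (hps : ∀ i, i < s.length → p[i]? = s[i]?)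
    (hS : 1 ≤ s.length) (hSL : s.length ≤ p.length) :
    ∀ d, d ≤ K → ∀ n1 n2,
      ((n1 = n2 ∧ n2 ≤ u.length + K * p.length) ∨
       (n1 = n2 + s.length ∧ u.length + K * p.length + 1 ≤ n2) ∨
       (∃ c, 1 ≤ c ∧ n1 = n2 + c * p.length ∧
         u.length + d * p.length + 1 ≤ n2 ∧
         n1 ≤ u.length + K * p.length + s.length)) →
      eqv (u ++ listPow p K ++ s ++ v) (u ++ listPow p K ++ v) d n1 n2 := by
  have hL : 1 ≤ p.length := le_trans hS hSL
  have hKL : p.length ≤ K * p.length := Nat.le_mul_of_pos_left _ hK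
  have hX : (listPow p K).length = K * p.length := listPow_length _ _
  -- branch 1: common prefix positions
  have branch1 : ∀ d n, n ≤ u.length + K * p.length →
      eqv (u ++ listPow p K ++ s ++ v) (u ++ listPow p K ++ v) d n n := by
    intro d n hn
    have hasc1 : u ++ listPow p K ++ s ++ v = (u ++ listPow p K) ++ (s ++ v) := by
      simp [List.append_assoc]
    have hasc2 : u ++ listPow p K ++ v = (u ++ listPow p K) ++ v := by
      simp [List.append_assoc]
    rw [hasc1, hasc2]
    exact eqv_prefix (by simp only [List.length_append, hX]; omega) d n
      (by simp only [List.length_append, hX]; omega)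
  -- letters for branches 2 and 3
  have letters : ∀ d n1 n2,
      ((n1 = n2 + s.length ∧ u.length + K * p.length + 1 ≤ n2) ∨
       (∃ c, 1 ≤ c ∧ n1 = n2 + c * p.length ∧
         u.length + d * p.length + 1 ≤ n2 ∧
         n1 ≤ u.length + K * p.length + s.length)) →
      ((1 ≤ n1 ↔ 1 ≤ n2) ∧
        (u ++ listPow p K ++ s ++ v)[n1 - 1]? = (u ++ listPow p K ++ v)[n2 - 1]?) := by
    intro d n1 n2 hR
    rcases hR with ⟨h1, h2⟩ | ⟨c, hc, h1, h2, h3⟩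
    · refine ⟨by omega, ?_⟩
      rw [show n1 - 1 = (n2 - 1) + s.length by omega]
      exact letter2 u p s v K (n2 - 1) (by omega)
    · have hdL : (0:ℕ) ≤ d * p.length := Nat.zero_le _
      refine ⟨by omega, ?_⟩
      rw [show n1 - 1 = (n2 - 1) + c * p.length by omega]
      exact letter3 u p s v K c (n2 - 1) hK hps hS hSL hc (by omega) (by omega)
  intro d
  induction d with
  | zero =>
    intro _ n1 n2 hR
    rcases hR with ⟨rfl, hb⟩ | hR
    · exact branch1 0 n1 hb
    · exact letters 0 n1 n2 hR
  | succ d ih =>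
    intro hdK n1 n2 hR
    have hd1L : (d + 1) * p.length = d * p.length + p.length := Nat.succ_mul d _
    have hdKL : d * p.length + p.length ≤ K * p.length := by
      have := Nat.mul_le_mul_right p.length hdK
      rwa [hd1L] at this
    rcases hR with ⟨rfl, hb⟩ | ⟨h1, h2⟩ | ⟨c, hc, h1, h2, h3⟩
    · exact branch1 (d + 1) n1 hb
    · refine ⟨letters (d + 1) n1 n2 (Or.inl ⟨h1, h2⟩), ?_, ?_⟩
      · -- forward witnesses
        intro m1 hm1 hlt
        rcases le_or_gt m1 (u.length + K * p.length) with h | h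
        · exact ⟨m1, hm1, by omega, ih (by omega) m1 m1 (Or.inl ⟨rfl, h⟩)⟩
        · rcases le_or_gt m1 (u.length + K * p.length + s.length) with h' | h'
          · refine ⟨m1 - p.length, by omega, by omega,
              ih (by omega) m1 (m1 - p.length) (Or.inr (Or.inr
                ⟨1, le_rfl, by rw [one_mul]; omega, by omega, by omega⟩))⟩
          · exact ⟨m1 - s.length, by omega, by omega,
              ih (by omega) m1 (m1 - s.length) (Or.inr (Or.inl ⟨by omega, by omega⟩))⟩
      · -- backward witnesses
        intro m2 hm2 hlt
        rcases le_or_gt m2 (u.length + K * p.length) with h | h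
        · exact ⟨m2, hm2, by omega, ih (by omega) m2 m2 (Or.inl ⟨rfl, h⟩)⟩
        · exact ⟨m2 + s.length, by omega, by omega,
            ih (by omega) (m2 + s.length) m2 (Or.inr (Or.inl ⟨rfl, by omega⟩))⟩
    · have hcL : p.length ≤ c * p.length := Nat.le_mul_of_pos_left _ hc
      refine ⟨letters (d + 1) n1 n2 (Or.inr ⟨c, hc, h1, h2, h3⟩), ?_, ?_⟩
      · -- forward witnesses
        intro m1 hm1 hlt
        rcases lt_or_ge m1 n2 with h | h
        · exact ⟨m1, hm1, h, ih (by omega) m1 m1 (Or.inl ⟨rfl, by omega⟩)⟩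
        · obtain ⟨q, hq⟩ : ∃ q, q = (m1 - n2) / p.length := ⟨_, rfl⟩
          obtain ⟨r, hr⟩ : ∃ r, r = (m1 - n2) % p.length := ⟨_, rfl⟩
          have hrlt : r < p.length := by rw [hr]; exact Nat.mod_lt _ (by omega)
          obtain ⟨Q, hQ⟩ : ∃ Q, Q = p.length * q := ⟨_, rfl⟩
          have hdm : Q + r = m1 - n2 := by
            rw [hQ, hq, hr]; exact Nat.div_add_mod _ _
          have hceq : (q + 1) * p.length = Q + p.length := by rw [hQ]; ring
          refine ⟨m1 - (Q + p.length), by omega, by omega,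
            ih (by omega) _ _ (Or.inr (Or.inr
              ⟨q + 1, by omega, by omega, by omega, by omega⟩))⟩
      · -- backward witnesses
        intro m2 hm2 hlt
        exact ⟨m2, hm2, by omega, ih (by omega) m2 m2 (Or.inl ⟨rfl, by omega⟩)⟩

end PTLPump

/-- If `ψ` has operator depth at most `K > 0`, then for all strings
`u, v, s, t`, the string `u (st)^K s v` satisfies `ψ` iff `u (st)^K v` does. -/
theorem ptl_pumping {α : Type*} [Fintype α] (ψ : PTL α) (K : ℕ) (hK : 0 < K)
    (hd : PTL.depth ψ ≤ K) (u v s t : List α) :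
    (PTL.Models (u ++ listPow (s ++ t) K ++ s ++ v) ψ ↔
      PTL.Models (u ++ listPow (s ++ t) K ++ v) ψ) := by
  by_cases hs : s = []
  · subst hs
    simp only [List.append_nil, List.nil_append]
  · have hS : 1 ≤ s.length := List.length_pos_iff.mpr hs
    have hSL : s.length ≤ (s ++ t).length := by
      rw [List.length_append]; omega
    have hps : ∀ i, i < s.length → (s ++ t)[i]? = s[i]? := fun i hi =>
      List.getElem?_append_left hi
    unfold PTL.Models
    apply PTLPump.sat_iff ψ K _ _ hd
    apply PTLPump.key u (s ++ t) s v K hK hps hS hSL K le_rfl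
    right; left
    constructor
    · simp only [List.length_append, PTLPump.listPow_length]
      omega
    · simp only [List.length_append, PTLPump.listPow_length]
      omega
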